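/- Let β₁ > 0, E > 0, and for β₂ > 0 define φ(β₂) = e^{β₁E} - α(β₂), where α(β₂) = 1 + (g₁+g₂)/(g₁ρ₁ + g₂ρ₂(β₂)), ρ₁ = 1/(e^{β₁E}-1), ρ₂(β₂) = 1/(e^{β₂E}-1), with fixed g₁, g₂ > 0. Then φ(β₁) = 0 and the derivative of φ with respect to β₂ at β₂ = β₁ is strictly negative, i.e. for δβ = β₁ - β₂ small, φ(β₂) = c·δβ + O(δβ²) with c > 0. -/

import Mathlib

/-- For the two-level system, `φ(β₂) = e^{β₁E} - α(β₂)` vanishes at `β₂ = β₁`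
and has strictly negative derivative there. -/
theorem two_level_phi_derivative (β₁ E g₁ g₂ : ℝ)
    (hβ₁ : 0 < β₁) (hE : 0 < E) (hg₁ : 0 < g₁) (hg₂ : 0 < g₂) :
    let ρ₁ : ℝ := 1 / (Real.exp (β₁ * E) - 1)
    let φ : ℝ → ℝ := fun β₂ =>
      Real.exp (β₁ * E) -
        (1 + (g₁ + g₂) / (g₁ * ρ₁ + g₂ * (1 / (Real.exp (β₂ * E) - 1))))
    φ β₁ = 0 ∧ deriv φ β₁ < 0 := by
  intro ρ₁ φ
  set x := Real.exp (β₁ * E) with hxdef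
  have hx : 1 < x := by
    have := Real.add_one_le_exp (β₁ * E)
    nlinarith [mul_pos hβ₁ hE]
  have hx1 : x - 1 ≠ 0 := by linarith
  have hρ₁pos : 0 < ρ₁ := by
    have h : (0:ℝ) < x - 1 := by linarith
    exact div_pos one_pos h
  have hDpos : 0 < g₁ * ρ₁ + g₂ * ρ₁ := by positivity
  -- value at β₁
  have hval : φ β₁ = 0 := by
    show x - (1 + (g₁ + g₂) / (g₁ * ρ₁ + g₂ * (1 / (x - 1)))) = 0
    have : (1 : ℝ) / (x - 1) = ρ₁ := rfl
    rw [this]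
    have hρ₁ : ρ₁ = 1 / (x - 1) := rfl
    field_simp [hρ₁]
    have key : (x - 1) * ρ₁ = 1 := by rw [hρ₁]; exact mul_one_div_cancel hx1
    linear_combination key
  refine ⟨hval, ?_⟩
  -- derivative
  have hf : HasDerivAt (fun β₂ : ℝ => Real.exp (β₂ * E) - 1) (x * E) β₁ := by
    have h1 : HasDerivAt (fun β₂ : ℝ => β₂ * E) E β₁ := by
      simpa using (hasDerivAt_id β₁).mul_const E
    simpa using (h1.exp.sub_const 1)
  have hfne : x - 1 ≠ 0 := hx1
  have hinv : HasDerivAt (fun β₂ : ℝ => 1 / (Real.exp (β₂ * E) - 1))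
      (-(x * E) / (x - 1) ^ 2) β₁ := by
    have h := hf.inv hfne
    rw [show (fun β₂ : ℝ => 1 / (Real.exp (β₂ * E) - 1)) = (fun β₂ : ℝ => Real.exp (β₂ * E) - 1)⁻¹ from by funext t; simp [one_div]]
    exact h
  have hD : HasDerivAt (fun β₂ : ℝ => g₁ * ρ₁ + g₂ * (1 / (Real.exp (β₂ * E) - 1)))
      (g₂ * (-(x * E) / (x - 1) ^ 2)) β₁ := by
    simpa using (hinv.const_mul g₂).const_add (g₁ * ρ₁)
  have hDval : g₁ * ρ₁ + g₂ * (1 / (x - 1)) = g₁ * ρ₁ + g₂ * ρ₁ := rfl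
  have hDne : g₁ * ρ₁ + g₂ * (1 / (x - 1)) ≠ 0 := by
    rw [hDval]; exact ne_of_gt hDpos
  have hq : HasDerivAt (fun β₂ : ℝ => (g₁ + g₂) / (g₁ * ρ₁ + g₂ * (1 / (Real.exp (β₂ * E) - 1))))
      ((0 * (g₁ * ρ₁ + g₂ * (1 / (x - 1))) - (g₁ + g₂) * (g₂ * (-(x * E) / (x - 1) ^ 2))) /
        (g₁ * ρ₁ + g₂ * (1 / (x - 1))) ^ 2) β₁ :=
    (hasDerivAt_const β₁ (g₁ + g₂)).div hD hDne
  have hφ : HasDerivAt φ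
      (-((0 * (g₁ * ρ₁ + g₂ * (1 / (x - 1))) - (g₁ + g₂) * (g₂ * (-(x * E) / (x - 1) ^ 2))) /
        (g₁ * ρ₁ + g₂ * (1 / (x - 1))) ^ 2)) β₁ :=
    (hq.const_add 1).const_sub x
  rw [hφ.deriv]
  have hxpos : 0 < x := lt_trans one_pos hx
  have hnum : 0 < (0 * (g₁ * ρ₁ + g₂ * (1 / (x - 1))) - (g₁ + g₂) * (g₂ * (-(x * E) / (x - 1) ^ 2))) := by
    have h1 : 0 < (x - 1) ^ 2 := by positivity
    have h2 : 0 < x * E / (x - 1) ^ 2 := div_pos (mul_pos hxpos hE) h1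
    have heq : 0 * (g₁ * ρ₁ + g₂ * (1 / (x - 1))) - (g₁ + g₂) * (g₂ * (-(x * E) / (x - 1) ^ 2))
        = (g₁ + g₂) * (g₂ * (x * E / (x - 1) ^ 2)) := by ring
    rw [heq]
    exact mul_pos (by linarith) (mul_pos hg₂ h2)
  have hden : 0 < (g₁ * ρ₁ + g₂ * (1 / (x - 1))) ^ 2 := by
    rw [hDval]; positivity
  have := div_pos hnum hden
  linarith
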